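/- Let G be a connected d-regular graph with d ≥ b+2 for an integer b ≥ 1, and let S ⊆ V(G) be nonempty with c(G-S) ≥ b|S|+1. Then at least b+1 components H of G-S satisfy e(S,H) ≤ d - b. -/
import Mathlib


/-- `H` is (the vertex set of) a connected component of `G - S`. -/
def IsCompOf {V : Type*} (G : SimpleGraph V) (S H : Finset V) : Prop :=
  H.Nonempty ∧ Disjoint H S ∧ (G.induce (H : Set V)).Connected ∧
    ∀ x ∈ H, ∀ y, y ∉ H → y ∉ S → ¬ G.Adj x y

/-- The number of edges of `G` between `S` and `H`. -/
def eSH {V : Type*} [DecidableEq V] (G : SimpleGraph V) [DecidableRel G.Adj]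
    (S H : Finset V) : ℕ :=
  ((S ×ˢ H).filter fun p => G.Adj p.1 p.2).card

open SimpleGraph in
lemma walk_induce_reach {V : Type*} (G : SimpleGraph V) (T H : Set V) :
    ∀ {a b : T} (p : (G.induce T).Walk a b), (∀ x ∈ p.support, (x : V) ∈ H) →
      ∀ (ha : (a : V) ∈ H) (hb : (b : V) ∈ H), (G.induce H).Reachable ⟨a, ha⟩ ⟨b, hb⟩ := by
  intro a b p
  induction p with
  | nil => intro _ ha hb; exact Reachable.refl _
  | @cons u v w h p ih =>
    intro hsupp ha hb
    have hv : (v : V) ∈ H := hsupp v (by simp)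
    have hadj : (G.induce H).Adj ⟨u, ha⟩ ⟨v, hv⟩ := by
      simp only [comap_adj, Function.Embedding.coe_subtype] at h ⊢
      exact h
    exact hadj.reachable.trans (ih (fun x hx => hsupp x (by simp [hx])) hv hb)

open SimpleGraph in
lemma exists_edge_of_walk {V : Type*} (G : SimpleGraph V) (S H : Finset V)
    (hcl : ∀ x ∈ H, ∀ y, y ∉ H → y ∉ S → ¬ G.Adj x y) :
    ∀ {x y : V} (_ : G.Walk x y), x ∈ H → y ∉ H → ∃ a ∈ H, ∃ t ∈ S, G.Adj a t := by
  intro x y p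
  induction p with
  | nil => intro hx hy; exact absurd hx hy
  | @cons u v w h p ih =>
    intro hx hy
    by_cases hv : v ∈ H
    · exact ih hv hy
    · by_cases hvS : v ∈ S
      · exact ⟨u, hx, v, hvS, h⟩
      · exact absurd h (hcl u hx v hv hvS)

theorem stmt9 {V : Type*} [Fintype V] [DecidableEq V]
    (G : SimpleGraph V) [DecidableRel G.Adj] (d b : ℕ) (hb : 1 ≤ b) (hdb : b + 2 ≤ d)
    (hG : G.Connected) (hreg : G.IsRegularOfDegree d)
    (S : Finset V) (hS : S.Nonempty)
    (hcut : Nat.card (G.induce ((↑S)ᶜ : Set V)).ConnectedComponent ≥ b * S.card + 1) :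
    ∃ 𝒞 : Finset (Finset V), b + 1 ≤ 𝒞.card ∧
      ∀ H ∈ 𝒞, IsCompOf G S H ∧ eSH G S H ≤ d - b := by
  classical
  open SimpleGraph in
  set T : Set V := ((↑S)ᶜ : Set V) with hT
  set G' := G.induce T with hG'def
  haveI : Fintype T := Fintype.ofFinite _
  haveI : Fintype G'.ConnectedComponent := Fintype.ofFinite _
  set Hc : G'.ConnectedComponent → Finset V :=
    fun c => Finset.univ.filter (fun v => ∃ h : v ∈ T, G'.connectedComponentMk ⟨v, h⟩ = c)
    with hHcdef
  have memHc : ∀ (c) (v : V), v ∈ Hc c ↔ ∃ h : v ∈ T, G'.connectedComponentMk ⟨v, h⟩ = c := by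
    intro c v; simp [hHcdef]
  have memT : ∀ v : V, v ∈ T ↔ v ∉ S := by intro v; simp [hT]
  -- closure property
  have hclosure : ∀ c, ∀ x ∈ Hc c, ∀ y, y ∉ Hc c → y ∉ S → ¬ G.Adj x y := by
    intro c x hx y hy hyS hadj
    obtain ⟨hxT, hxc⟩ := (memHc c x).1 hx
    have hyT : y ∈ T := (memT y).2 hyS
    have hadj' : G'.Adj ⟨x, hxT⟩ ⟨y, hyT⟩ := by
      simp only [hG'def, comap_adj, Function.Embedding.coe_subtype]
      exact hadj
    exact hy ((memHc c y).2 ⟨hyT, by rw [← hxc]; exact (ConnectedComponent.connectedComponentMk_eq_of_adj hadj').symm⟩)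
  have hdisj : ∀ c, Disjoint (Hc c) S := by
    intro c
    rw [Finset.disjoint_left]
    intro v hv hvS
    obtain ⟨hvT, _⟩ := (memHc c v).1 hv
    exact (memT v).1 hvT hvS
  have hnonempty : ∀ c, (Hc c).Nonempty := by
    intro c
    obtain ⟨⟨v, hvT⟩, rfl⟩ := c.exists_rep
    exact ⟨v, (memHc _ v).2 ⟨hvT, rfl⟩⟩
  have hcomp : ∀ c, IsCompOf G S (Hc c) := by
    intro c
    refine ⟨hnonempty c, hdisj c, ?_, hclosure c⟩
    rw [SimpleGraph.connected_iff]
    constructor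
    · -- preconnected
      rintro ⟨u, hu⟩ ⟨v, hv⟩
      obtain ⟨huT, huc⟩ := (memHc c u).1 hu
      obtain ⟨hvT, hvc⟩ := (memHc c v).1 hv
      have hr : G'.Reachable ⟨u, huT⟩ ⟨v, hvT⟩ := by
        rw [← SimpleGraph.ConnectedComponent.eq, huc, hvc]
      obtain ⟨p⟩ := hr
      have hsupp : ∀ x ∈ p.support, (x : V) ∈ (↑(Hc c) : Set V) := by
        intro x hx
        have : G'.Reachable ⟨u, huT⟩ x := ⟨p.takeUntil x hx⟩
        have : G'.connectedComponentMk x = c := by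
          rw [← huc, SimpleGraph.ConnectedComponent.eq]
          exact this.symm
        simpa using (memHc c x).2 ⟨x.2, by simpa using this⟩
      have := walk_induce_reach G T (↑(Hc c)) p hsupp (by simpa using hu) (by simpa using hv)
      exact this
    · exact ⟨⟨_, (hnonempty c).choose_spec⟩⟩
  -- each component has at least one edge to S
  have hepos : ∀ c, 1 ≤ eSH G S (Hc c) := by
    intro c
    obtain ⟨x, hx⟩ := hnonempty c
    obtain ⟨s, hs⟩ := hS
    obtain ⟨p⟩ := hG.preconnected x s
    have hsnot : s ∉ Hc c := fun h => (Finset.disjoint_left.1 (hdisj c)) h hs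
    obtain ⟨a, ha, t, ht, hadj⟩ := exists_edge_of_walk G S (Hc c) (hclosure c) p hx hsnot
    rw [eSH, Nat.one_le_iff_ne_zero, ← Nat.pos_iff_ne_zero, Finset.card_pos]
    exact ⟨(t, a), by simp [Finset.mem_filter, Finset.mem_product, ht, ha, hadj.symm]⟩
  -- sum bound
  have hsum : ∑ c, eSH G S (Hc c) ≤ d * S.card := by
    have hdisjA : ∀ c c' : G'.ConnectedComponent, c ≠ c' →
        Disjoint ((S ×ˢ Hc c).filter fun p => G.Adj p.1 p.2)
          ((S ×ˢ Hc c').filter fun p => G.Adj p.1 p.2) := by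
      intro c c' hne
      rw [Finset.disjoint_left]
      rintro ⟨x, y⟩ h1 h2
      simp only [Finset.mem_filter, Finset.mem_product] at h1 h2
      obtain ⟨h, hc⟩ := (memHc c y).1 h1.1.2
      obtain ⟨h', hc'⟩ := (memHc c' y).1 h2.1.2
      exact hne (by rw [← hc, ← hc'])
    have hsubB : ∀ c, ((S ×ˢ Hc c).filter fun p => G.Adj p.1 p.2) ⊆
        ((S ×ˢ Finset.univ).filter fun p => G.Adj p.1 p.2) := by
      intro c
      intro p hp
      simp only [Finset.mem_filter, Finset.mem_product] at hp ⊢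
      exact ⟨⟨hp.1.1, Finset.mem_univ _⟩, hp.2⟩
    calc ∑ c, eSH G S (Hc c)
        = (Finset.univ.biUnion fun c => (S ×ˢ Hc c).filter fun p => G.Adj p.1 p.2).card := by
          rw [Finset.card_biUnion (fun c _ c' _ h => hdisjA c c' h)]
          rfl
      _ ≤ ((S ×ˢ Finset.univ).filter fun p => G.Adj p.1 p.2).card := by
          apply Finset.card_le_card
          intro p hp
          obtain ⟨c, _, hc⟩ := Finset.mem_biUnion.1 hp
          exact hsubB c hc
      _ = ∑ x ∈ S, (Finset.univ.filter fun y => G.Adj x y).card := by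
          rw [Finset.card_filter, Finset.sum_product]
          exact Finset.sum_congr rfl fun x _ => (Finset.card_filter _ _).symm
      _ = ∑ x ∈ S, d := by
          apply Finset.sum_congr rfl
          intro x _
          rw [← hreg x, SimpleGraph.degree, SimpleGraph.neighborFinset_eq_filter]
      _ = d * S.card := by rw [Finset.sum_const, smul_eq_mul, mul_comm]
  -- injectivity
  have hinj : Function.Injective Hc := by
    intro c c' h
    obtain ⟨v, hv⟩ := hnonempty c
    have hv' : v ∈ Hc c' := h ▸ hv
    obtain ⟨h1, hc1⟩ := (memHc c v).1 hv
    obtain ⟨h2, hc2⟩ := (memHc c' v).1 hv'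
    rw [← hc1, ← hc2]
  -- counting argument
  set K : Finset G'.ConnectedComponent :=
    Finset.univ.filter (fun c => eSH G S (Hc c) ≤ d - b) with hKdef
  have hKcard : b + 1 ≤ K.card := by
    by_contra hcon
    push_neg at hcon
    have hk : K.card ≤ b := Nat.lt_succ_iff.1 hcon
    set N := Fintype.card G'.ConnectedComponent with hN
    have hNge : b * S.card + 1 ≤ N := by
      rwa [ge_iff_le, Nat.card_eq_fintype_card] at hcut
    have hsplit : ∑ c, eSH G S (Hc c) =
        ∑ c ∈ K, eSH G S (Hc c) + ∑ c ∈ Kᶜ, eSH G S (Hc c) := by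
      rw [← Finset.sum_add_sum_compl K]
    have h1 : K.card ≤ ∑ c ∈ K, eSH G S (Hc c) := by
      calc K.card = ∑ _c ∈ K, 1 := by simp
        _ ≤ _ := Finset.sum_le_sum (fun c _ => hepos c)
    have h2 : Kᶜ.card * (d - b + 1) ≤ ∑ c ∈ Kᶜ, eSH G S (Hc c) := by
      calc Kᶜ.card * (d - b + 1) = ∑ _c ∈ Kᶜ, (d - b + 1) := by
            rw [Finset.sum_const, smul_eq_mul]
        _ ≤ _ := by
            apply Finset.sum_le_sum
            intro c hc
            rw [Finset.mem_compl, hKdef, Finset.mem_filter] at hc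
            push_neg at hc
            exact hc (Finset.mem_univ c)
    have hKc : Kᶜ.card = N - K.card := by
      rw [Finset.card_compl, hN]
    have hKleN : K.card ≤ N := by
      rw [hN]; exact Finset.card_le_univ K
    -- arithmetic
    obtain ⟨e, he⟩ : ∃ e, d = b + e := ⟨d - b, by omega⟩
    have he2 : 2 ≤ e := by omega
    have hdb' : d - b = e := by omega
    set s := S.card with hs
    have hs1 : 1 ≤ s := Finset.card_pos.2 hS
    set k := K.card with hkdef
    set m := Kᶜ.card with hm
    have hmk : m + k = N := by omega
    have hfinal : k + m * (e + 1) ≤ (b + e) * s := by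
      calc k + m * (e + 1) ≤ ∑ c ∈ K, eSH G S (Hc c) + ∑ c ∈ Kᶜ, eSH G S (Hc c) := by
            rw [hdb'] at h2
            exact Nat.add_le_add h1 h2
        _ = ∑ c, eSH G S (Hc c) := hsplit.symm
        _ ≤ d * s := hsum
        _ = (b + e) * s := by rw [he]
    have hmk2 : b * s + 1 ≤ m + k := by omega
    have H : (k : ℤ) + m * (e + 1) ≤ (b + e) * s := by exact_mod_cast hfinal
    have H2 : (b : ℤ) * s + 1 ≤ m + k := by exact_mod_cast hmk2
    have hb' : (1 : ℤ) ≤ b := by exact_mod_cast hb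
    have hs' : (1 : ℤ) ≤ s := by exact_mod_cast hs1
    have he' : (2 : ℤ) ≤ e := by exact_mod_cast he2
    have hk' : (k : ℤ) ≤ b := by exact_mod_cast hk
    nlinarith [mul_nonneg (mul_nonneg (by linarith : (0:ℤ) ≤ (b:ℤ) - 1) (by linarith : (0:ℤ) ≤ (s:ℤ) - 1)) (by linarith : (0:ℤ) ≤ (e:ℤ)),
      mul_nonneg (by linarith : (0:ℤ) ≤ (b:ℤ) - k) (by linarith : (0:ℤ) ≤ (e:ℤ)),
      mul_le_mul_of_nonneg_left H2 (by linarith : (0:ℤ) ≤ (e:ℤ) + 1)]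
  refine ⟨K.image Hc, ?_, ?_⟩
  · rwa [Finset.card_image_of_injective _ hinj]
  · intro H hH
    obtain ⟨c, hc, rfl⟩ := Finset.mem_image.1 hH
    rw [hKdef, Finset.mem_filter] at hc
    exact ⟨hcomp c, hc.2⟩
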